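/- Let view and aux_i, aux_j be finite sets of pairs such that aux_i and aux_j satisfy the IS Immediacy and Containment properties (⟨i,−⟩ ∈ aux_j ⇒ aux_i ⊆ aux_j, and aux_i, aux_j are ⊆-comparable), and define view_i = view ∪ aux_i, view_j = view ∪ aux_j. Then view_i and view_j are ⊆-comparable, and if ⟨i,−⟩ ∈ view_j with ⟨i,−⟩ ∉ view, then view_i ⊆ view_j. If additionally ⟨i,−⟩ ∈ view, then view ⊆ view_j trivially gives the needed inclusion when view_i = view. -/
import Mathlib

/-- correctness core of the consensus-based k-IS construction.
With `view_i = view ∪ aux_i` and `view_j = view ∪ aux_j`, where the aux sets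
satisfy IS Immediacy and Containment, the resulting views are ⊆-comparable,
and Immediacy-style inclusions hold. -/
theorem cons_kIS_union_lemma
    {ι Val : Type} [DecidableEq ι] [DecidableEq Val]
    (i : ι)
    (view auxi auxj : Finset (ι × Val))
    (hImm : (∃ v, (i, v) ∈ auxj) → auxi ⊆ auxj)
    (hComp : auxi ⊆ auxj ∨ auxj ⊆ auxi) :
    (view ∪ auxi ⊆ view ∪ auxj ∨ view ∪ auxj ⊆ view ∪ auxi) ∧
    ((∃ v, (i, v) ∈ view ∪ auxj) → (∀ v, (i, v) ∉ view) →
       view ∪ auxi ⊆ view ∪ auxj) ∧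
    ((∃ v, (i, v) ∈ view) → view ⊆ view ∪ auxj) := by
  refine ⟨?_, ?_, fun _ => Finset.subset_union_left⟩
  · rcases hComp with h | h
    · exact Or.inl (Finset.union_subset_union_right h)
    · exact Or.inr (Finset.union_subset_union_right h)
  · rintro ⟨v, hv⟩ hnv
    have : (i, v) ∈ auxj := by
      rcases Finset.mem_union.1 hv with h | h
      · exact absurd h (hnv v)
      · exact h
    exact Finset.union_subset_union_right (hImm ⟨v, this⟩)
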